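/- Suppose u and u_c are differentiable on ℝⁿ, the functions p|∇u|², p|∇u_c|², p ∇u·∇u_c, q u², q u_c², q u u_c, f u and f u_c are all integrable on Ω, and the weak-solution identity for u_c with coefficients (p,q,f) holds tested against v = u − u_c. Then G_λ(c) = ∫_Ω ( p (|∇u|² − |∇u_c|²) + λ q (u² − u_c²) − 2 f (u − u_c) ) dx. -/

import Mathlib

open MeasureTheory Set
open scoped RealInnerProductSpace

/-- If `u` and `u_c` are differentiable, the listed products are integrable on `Ω`,
and the weak-solution identity for `u_c` with coefficients `(p, q, f)` holds tested against
`v = u - u_c`, then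
`G_λ(c) = ∫_Ω (p (|∇u|² - |∇u_c|²) + λ q (u² - u_c²) - 2 f (u - u_c)) dx`. -/
theorem Glambda_alternative_form {n : ℕ} (hn : 1 ≤ n)
    (Ω : Set (EuclideanSpace ℝ (Fin n))) (hΩ : IsOpen Ω)
    (lam : ℝ) (u uc p q f : EuclideanSpace ℝ (Fin n) → ℝ)
    (hu : Differentiable ℝ u) (huc : Differentiable ℝ uc)
    (hI1 : IntegrableOn (fun x => p x * ‖gradient u x‖ ^ 2) Ω)
    (hI2 : IntegrableOn (fun x => p x * ‖gradient uc x‖ ^ 2) Ω)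
    (hI3 : IntegrableOn (fun x => p x * ⟪gradient u x, gradient uc x⟫) Ω)
    (hI4 : IntegrableOn (fun x => q x * (u x) ^ 2) Ω)
    (hI5 : IntegrableOn (fun x => q x * (uc x) ^ 2) Ω)
    (hI6 : IntegrableOn (fun x => q x * (u x * uc x)) Ω)
    (hI7 : IntegrableOn (fun x => f x * u x) Ω)
    (hI8 : IntegrableOn (fun x => f x * uc x) Ω)
    (hweak : ∫ x in Ω, (p x * ⟪gradient uc x, gradient (fun y => u y - uc y) x⟫
          + lam * q x * uc x * (u x - uc x))
        = ∫ x in Ω, f x * (u x - uc x)) :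
    ∫ x in Ω, (p x * ‖gradient (fun y => u y - uc y) x‖ ^ 2
        + lam * (q x * (u x - uc x) ^ 2))
      = ∫ x in Ω, (p x * (‖gradient u x‖ ^ 2 - ‖gradient uc x‖ ^ 2)
        + lam * (q x * ((u x) ^ 2 - (uc x) ^ 2))
        - 2 * f x * (u x - uc x)) := by
  have hgrad : ∀ x, gradient (fun y => u y - uc y) x = gradient u x - gradient uc x := by
    intro x
    unfold gradient
    rw [fderiv_fun_sub (hu x) (huc x), map_sub]
  simp only [hgrad] at hweak ⊢
  have hW : IntegrableOn (fun x => p x * ⟪gradient uc x, gradient u x - gradient uc x⟫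
      + lam * q x * uc x * (u x - uc x)) Ω := by
    have heq : (fun x => p x * ⟪gradient uc x, gradient u x - gradient uc x⟫
        + lam * q x * uc x * (u x - uc x))
        = fun x => (p x * ⟪gradient u x, gradient uc x⟫ - p x * ‖gradient uc x‖ ^ 2)
          + lam * (q x * (u x * uc x) - q x * (uc x) ^ 2) := by
      funext x
      rw [inner_sub_right, real_inner_comm (gradient uc x) (gradient u x),
        real_inner_self_eq_norm_sq]
      ring
    rw [heq]
    exact (hI3.sub hI2).add ((hI6.sub hI5).const_mul lam)
  have hV : IntegrableOn (fun x => f x * (u x - uc x)) Ω := by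
    have heq : (fun x => f x * (u x - uc x)) = fun x => f x * u x - f x * uc x := by
      funext x; ring
    rw [heq]
    exact hI7.sub hI8
  have hR : IntegrableOn (fun x => p x * (‖gradient u x‖ ^ 2 - ‖gradient uc x‖ ^ 2)
      + lam * (q x * ((u x) ^ 2 - (uc x) ^ 2)) - 2 * f x * (u x - uc x)) Ω := by
    have heq : (fun x => p x * (‖gradient u x‖ ^ 2 - ‖gradient uc x‖ ^ 2)
        + lam * (q x * ((u x) ^ 2 - (uc x) ^ 2)) - 2 * f x * (u x - uc x))
        = fun x => ((p x * ‖gradient u x‖ ^ 2 - p x * ‖gradient uc x‖ ^ 2)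
          + lam * (q x * (u x) ^ 2 - q x * (uc x) ^ 2))
          - 2 * (f x * u x - f x * uc x) := by
      funext x; ring
    rw [heq]
    exact ((hI1.sub hI2).add ((hI4.sub hI5).const_mul lam)).sub ((hI7.sub hI8).const_mul 2)
  have key : ∀ x : EuclideanSpace ℝ (Fin n),
      p x * ‖gradient u x - gradient uc x‖ ^ 2 + lam * (q x * (u x - uc x) ^ 2)
      = (p x * (‖gradient u x‖ ^ 2 - ‖gradient uc x‖ ^ 2)
          + lam * (q x * ((u x) ^ 2 - (uc x) ^ 2)) - 2 * f x * (u x - uc x))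
        - 2 * ((p x * ⟪gradient uc x, gradient u x - gradient uc x⟫
          + lam * q x * uc x * (u x - uc x)) - f x * (u x - uc x)) := by
    intro x
    rw [norm_sub_sq_real, inner_sub_right, real_inner_comm (gradient uc x) (gradient u x),
      real_inner_self_eq_norm_sq]
    ring
  simp only [key]
  have hWV : IntegrableOn (fun x => (p x * ⟪gradient uc x, gradient u x - gradient uc x⟫
      + lam * q x * uc x * (u x - uc x)) - f x * (u x - uc x)) Ω := by
    exact hW.sub hV
  rw [integral_sub hR (hWV.const_mul 2), integral_const_mul, integral_sub hW hV,
    hweak, sub_self, mul_zero, sub_zero]
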